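/- Let (M,d) be a metric space of diameter ≤ 1 and let S = [0,1]^{M×M} be equipped with the operation (f ∙ g)(x,y) = inf_{z∈M} min(f(x,z) + g(z,y), 1). Then ∙ is associative, and a function f : M² → [0,1] is bi-Katětov if and only if f ∙ d = d ∙ f = f, f* ∙ f ≥ d, and f ∙ f* ≥ d, where f*(x,y) = f(y,x). Consequently the set Θ of bi-Katětov functions is closed under ∙ and is a monoid with unit d. -/

import Mathlib

section Helpers

private lemma katBdd0 {ι : Sort*} (F : ι → ℝ) (h : ∀ i, 0 ≤ F i) : BddBelow (Set.range F) :=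
  ⟨0, by rintro _ ⟨i, rfl⟩; exact h i⟩

private lemma katInfAdd {ι : Sort*} [Nonempty ι] (F : ι → ℝ) (hF : ∀ i, 0 ≤ F i) (c : ℝ) :
    (⨅ i, F i) + c = ⨅ i, F i + c := by
  refine le_antisymm (le_ciInf fun i => add_le_add (ciInf_le (katBdd0 F hF) i) le_rfl) ?_
  have h1 : (⨅ i, F i + c) - c ≤ ⨅ i, F i :=
    le_ciInf fun i => by
      have hb : BddBelow (Set.range fun i => F i + c) :=
        ⟨c, by rintro _ ⟨i, rfl⟩; exact le_add_of_nonneg_left (hF i)⟩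
      have := ciInf_le hb i
      linarith
  linarith

private lemma katMinInfOne {ι : Sort*} [Nonempty ι] (F : ι → ℝ) (hF : ∀ i, 0 ≤ F i) :
    min (⨅ i, F i) 1 = ⨅ i, min (F i) 1 := by
  refine le_antisymm (le_ciInf fun i => min_le_min (ciInf_le (katBdd0 F hF) i) le_rfl) ?_
  refine le_min ?_ ?_
  · exact le_ciInf fun i =>
      (ciInf_le (katBdd0 _ fun i => le_min (hF i) one_pos.le) i).trans (min_le_left _ _)
  · exact (ciInf_le (katBdd0 _ fun i => le_min (hF i) one_pos.le) (Classical.arbitrary _)).trans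
      (min_le_right _ _)

private lemma katMinAddOne {a c : ℝ} (hc0 : 0 ≤ c) (hc1 : c ≤ 1) :
    min (min a 1 + c) 1 = min (a + c) 1 := by
  rcases le_total a 1 with h | h
  · rw [min_eq_left h]
  · rw [min_eq_right h, min_eq_right (by linarith), min_eq_right (by linarith)]

private lemma katMinOneLeAdd {a b c : ℝ} (h : a ≤ b + c) (hc : 0 ≤ c) :
    min a 1 ≤ min b 1 + c := by
  rcases le_total b 1 with h' | h'
  · rw [min_eq_left h']; exact (min_le_left _ _).trans h
  · rw [min_eq_right h']; linarith [min_le_right a 1]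

private lemma katLeMinAddMin {t A B : ℝ} (ht : t ≤ 1) (h : t ≤ A + B) (hA : 0 ≤ A)
    (hB : 0 ≤ B) : t ≤ min A 1 + min B 1 := by
  rcases le_total A 1 with h1 | h1 <;> rcases le_total B 1 with h2 | h2
  · rw [min_eq_left h1, min_eq_left h2]; exact h
  · rw [min_eq_left h1, min_eq_right h2]; linarith
  · rw [min_eq_right h1, min_eq_left h2]; linarith
  · rw [min_eq_right h1, min_eq_right h2]; linarith

private lemma katInfSwap {ι κ : Sort*} [Nonempty ι] [Nonempty κ] (F : ι → κ → ℝ)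
    (h : ∀ i j, 0 ≤ F i j) : ⨅ i, ⨅ j, F i j = ⨅ j, ⨅ i, F i j := by
  have hb : ∀ i, 0 ≤ ⨅ j, F i j := fun i => Real.iInf_nonneg (h i)
  have hb' : ∀ j, 0 ≤ ⨅ i, F i j := fun j => Real.iInf_nonneg fun i => h i j
  refine le_antisymm ?_ ?_
  · exact le_ciInf fun j => le_ciInf fun i =>
      (ciInf_le (katBdd0 _ hb) i).trans (ciInf_le (katBdd0 _ (h i)) j)
  · exact le_ciInf fun i => le_ciInf fun j =>
      (ciInf_le (katBdd0 _ hb') j).trans (ciInf_le (katBdd0 _ fun i => h i j) i)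

end Helpers

/-- The operation `(f ∙ g)(x,y) = inf_z min(f(x,z) + g(z,y), 1)`. -/
noncomputable def opK {M : Type*} [MetricSpace M] (f g : M × M → ℝ) : M × M → ℝ :=
  fun p => ⨅ z : M, min (f (p.1, z) + g (z, p.2)) 1

/-- A bi-Katětov function on `M²`: both `f(x,·)` and `f(·,x)` are Katětov for every `x`. -/
def IsBiKatetov {M : Type*} [MetricSpace M] (f : M × M → ℝ) : Prop :=
  (∀ p, f p ∈ Set.Icc (0 : ℝ) 1) ∧
  (∀ x y z : M, |f (x, y) - f (x, z)| ≤ dist y z ∧ dist y z ≤ f (x, y) + f (x, z)) ∧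
  (∀ x y z : M, |f (y, x) - f (z, x)| ≤ dist y z ∧ dist y z ≤ f (y, x) + f (z, x))

section Main

variable {M : Type*} [MetricSpace M]

private lemma katTermNonneg (f g : M × M → ℝ) (hf : ∀ p, 0 ≤ f p) (hg : ∀ p, 0 ≤ g p)
    (x y : M) : ∀ z, (0:ℝ) ≤ min (f (x, z) + g (z, y)) 1 := fun z =>
  le_min (add_nonneg (hf _) (hg _)) one_pos.le

private lemma katOpKLeTerm (f g : M × M → ℝ) (hf : ∀ p, 0 ≤ f p) (hg : ∀ p, 0 ≤ g p)
    (x y z : M) : opK f g (x, y) ≤ min (f (x, z) + g (z, y)) 1 :=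
  ciInf_le (katBdd0 _ (katTermNonneg f g hf hg x y)) z

end Main

/-- `∙` is associative on `[0,1]`-valued functions on `M²`; a `[0,1]`-valued
function `f` is bi-Katětov iff `f ∙ d = d ∙ f = f`, `f* ∙ f ≥ d`, `f ∙ f* ≥ d`; hence the
set of bi-Katětov functions is closed under `∙` and is a monoid with unit `d`. -/
theorem stmt_14 {M : Type*} [MetricSpace M] (hdiam : ∀ x y : M, dist x y ≤ 1) :
    (∀ f g h : M × M → ℝ, (∀ p, f p ∈ Set.Icc (0 : ℝ) 1) →
      (∀ p, g p ∈ Set.Icc (0 : ℝ) 1) → (∀ p, h p ∈ Set.Icc (0 : ℝ) 1) →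
      opK (opK f g) h = opK f (opK g h)) ∧
    (∀ f : M × M → ℝ, (∀ p, f p ∈ Set.Icc (0 : ℝ) 1) →
      (IsBiKatetov f ↔
        (opK f (fun p => dist p.1 p.2) = f ∧
         opK (fun p => dist p.1 p.2) f = f ∧
         (fun p : M × M => dist p.1 p.2) ≤ opK (fun p => f (p.2, p.1)) f ∧
         (fun p : M × M => dist p.1 p.2) ≤ opK f (fun p => f (p.2, p.1))))) ∧
    ∀ f g : M × M → ℝ, IsBiKatetov f → IsBiKatetov g → IsBiKatetov (opK f g) := by
  refine ⟨?_, ?_, ?_⟩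
  · -- associativity
    intro f g h hf hg hh
    have hf0 : ∀ p, 0 ≤ f p := fun p => (hf p).1
    have hg0 : ∀ p, 0 ≤ g p := fun p => (hg p).1
    have hh0 : ∀ p, 0 ≤ h p := fun p => (hh p).1
    funext p
    obtain ⟨x, y⟩ := p
    haveI : Nonempty M := ⟨x⟩
    have key : ∀ w, min (opK f g (x, w) + h (w, y)) 1
        = ⨅ z, min (f (x, z) + g (z, w) + h (w, y)) 1 := by
      intro w
      have e : opK f g (x, w) + h (w, y)
          = ⨅ z, (min (f (x, z) + g (z, w)) 1 + h (w, y)) :=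
        katInfAdd _ (katTermNonneg f g hf0 hg0 x w) _
      rw [e, katMinInfOne _ (fun z => by
          have := katTermNonneg f g hf0 hg0 x w z
          linarith [hh0 (w, y)])]
      exact iInf_congr fun z => katMinAddOne (hh _).1 (hh _).2
    have key2 : ∀ z, min (f (x, z) + opK g h (z, y)) 1
        = ⨅ w, min (f (x, z) + (g (z, w) + h (w, y))) 1 := by
      intro z
      have e : f (x, z) + opK g h (z, y)
          = ⨅ w, (f (x, z) + min (g (z, w) + h (w, y)) 1) := by
        rw [add_comm (f (x, z)) (opK g h (z, y)),
          show opK g h (z, y) = ⨅ w, min (g (z, w) + h (w, y)) 1 from rfl,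
          katInfAdd _ (katTermNonneg g h hg0 hh0 z y) (f (x, z))]
        exact iInf_congr fun w => add_comm _ _
      rw [e, katMinInfOne _ (fun w => by
          have := katTermNonneg g h hg0 hh0 z y w
          linarith [hf0 (x, z)])]
      refine iInf_congr fun w => ?_
      rw [add_comm (f (x, z)), add_comm (f (x, z)),
        katMinAddOne (hf (x, z)).1 (hf (x, z)).2]
    show (⨅ w, min (opK f g (x, w) + h (w, y)) 1) = ⨅ z, min (f (x, z) + opK g h (z, y)) 1
    simp_rw [key, key2]
    rw [katInfSwap (fun w z => min (f (x, z) + g (z, w) + h (w, y)) 1)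
      (fun w z => le_min (add_nonneg (add_nonneg (hf0 _) (hg0 _)) (hh0 _)) one_pos.le)]
    exact iInf_congr fun z => iInf_congr fun w => by rw [add_assoc]
  · -- characterization
    intro f hf
    have hf0 : ∀ p, 0 ≤ f p := fun p => (hf p).1
    have hfs0 : ∀ p : M × M, 0 ≤ f (p.2, p.1) := fun p => hf0 _
    have hd0 : ∀ p : M × M, 0 ≤ dist p.1 p.2 := fun p => dist_nonneg
    constructor
    · rintro ⟨hb, h2, h3⟩
      refine ⟨?_, ?_, ?_, ?_⟩
      · funext p; obtain ⟨x, y⟩ := p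
        haveI : Nonempty M := ⟨x⟩
        refine le_antisymm ?_ (le_ciInf fun z => le_min ?_ (hf (x, y)).2)
        · have h1 : opK f (fun p => dist p.1 p.2) (x, y) ≤ min (f (x, y) + dist y y) 1 :=
            katOpKLeTerm f (fun p => dist p.1 p.2) hf0 hd0 x y y
          rwa [dist_self, add_zero, min_eq_left (hf (x, y)).2] at h1
        · show f (x, y) ≤ f (x, z) + dist z y
          have h1 := (abs_le.mp (h2 x y z).1).2
          have h4 : dist y z = dist z y := dist_comm y z
          linarith
      · funext p; obtain ⟨x, y⟩ := p
        haveI : Nonempty M := ⟨x⟩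
        refine le_antisymm ?_ (le_ciInf fun z => le_min ?_ (hf (x, y)).2)
        · have h1 : opK (fun p => dist p.1 p.2) f (x, y) ≤ min (dist x x + f (x, y)) 1 :=
            katOpKLeTerm (fun p => dist p.1 p.2) f hd0 hf0 x y x
          rwa [dist_self, zero_add, min_eq_left (hf (x, y)).2] at h1
        · show f (x, y) ≤ dist x z + f (z, y)
          have h1 := (abs_le.mp (h3 y x z).1).2
          linarith
      · intro p; obtain ⟨x, y⟩ := p
        haveI : Nonempty M := ⟨x⟩
        exact le_ciInf fun z => le_min (h2 z x y).2 (hdiam x y)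
      · intro p; obtain ⟨x, y⟩ := p
        haveI : Nonempty M := ⟨x⟩
        exact le_ciInf fun z => le_min (h3 z x y).2 (hdiam x y)
    · rintro ⟨e1, e2, l1, l2⟩
      have key1 : ∀ x y z : M, f (x, y) ≤ f (x, z) + dist z y := by
        intro x y z
        have h1 : opK f (fun p => dist p.1 p.2) (x, y) ≤ min (f (x, z) + dist z y) 1 :=
          katOpKLeTerm f (fun p => dist p.1 p.2) hf0 hd0 x y z
        rw [e1] at h1
        exact h1.trans (min_le_left _ _)
      have key2 : ∀ x y z : M, f (x, y) ≤ dist x z + f (z, y) := by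
        intro x y z
        have h1 : opK (fun p => dist p.1 p.2) f (x, y) ≤ min (dist x z + f (z, y)) 1 :=
          katOpKLeTerm (fun p => dist p.1 p.2) f hd0 hf0 x y z
        rw [e2] at h1
        exact h1.trans (min_le_left _ _)
      have key3 : ∀ x y z : M, dist y z ≤ f (x, y) + f (x, z) := by
        intro x y z
        have h1 : dist y z ≤ opK (fun p => f (p.2, p.1)) f (y, z) := l1 (y, z)
        have h4 : opK (fun p => f (p.2, p.1)) f (y, z) ≤ min (f (x, y) + f (x, z)) 1 :=
          katOpKLeTerm (fun p => f (p.2, p.1)) f hfs0 hf0 y z x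
        exact h1.trans (h4.trans (min_le_left _ _))
      have key4 : ∀ x y z : M, dist y z ≤ f (y, x) + f (z, x) := by
        intro x y z
        have h1 : dist y z ≤ opK f (fun p => f (p.2, p.1)) (y, z) := l2 (y, z)
        have h4 : opK f (fun p => f (p.2, p.1)) (y, z) ≤ min (f (y, x) + f (z, x)) 1 :=
          katOpKLeTerm f (fun p => f (p.2, p.1)) hf0 hfs0 y z x
        exact h1.trans (h4.trans (min_le_left _ _))
      refine ⟨hf, fun x y z => ⟨?_, key3 x y z⟩, fun x y z => ⟨?_, key4 x y z⟩⟩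
      · rw [abs_le]
        have a1 := key1 x y z
        have a2 := key1 x z y
        have a3 : dist z y = dist y z := dist_comm z y
        have a4 : dist y z = dist z y := dist_comm y z
        constructor <;> linarith
      · rw [abs_le]
        have a1 := key2 y x z
        have a2 := key2 z x y
        have a3 : dist z y = dist y z := dist_comm z y
        constructor <;> linarith
  · -- closure
    intro f g hf hg
    obtain ⟨hfb, hf2, hf3⟩ := hf
    obtain ⟨hgb, hg2, hg3⟩ := hg
    have hf0 : ∀ p, 0 ≤ f p := fun p => (hfb p).1
    have hg0 : ∀ p, 0 ≤ g p := fun p => (hgb p).1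
    refine ⟨?_, fun x y z => ⟨?_, ?_⟩, fun x y z => ⟨?_, ?_⟩⟩
    · intro p; obtain ⟨x, y⟩ := p
      haveI : Nonempty M := ⟨x⟩
      exact ⟨Real.iInf_nonneg (katTermNonneg f g hf0 hg0 x y),
        (katOpKLeTerm f g hf0 hg0 x y x).trans (min_le_right _ _)⟩
    · haveI : Nonempty M := ⟨x⟩
      have A : ∀ a b : M, opK f g (x, a) ≤ opK f g (x, b) + dist a b := by
        intro a b
        have h1 : opK f g (x, a) - dist a b ≤ opK f g (x, b) :=
          le_ciInf fun w => by
            have u1 : opK f g (x, a) ≤ min (f (x, w) + g (w, a)) 1 :=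
              katOpKLeTerm f g hf0 hg0 x a w
            have u2 : min (f (x, w) + g (w, a)) 1
                ≤ min (f (x, w) + g (w, b)) 1 + dist a b :=
              katMinOneLeAdd
                (by have := (abs_le.mp (hg2 w a b).1).2; linarith) dist_nonneg
            linarith
        linarith
      rw [abs_le]
      have a1 := A y z
      have a2 := A z y
      have a3 : dist z y = dist y z := dist_comm z y
      constructor <;> linarith
    · haveI : Nonempty M := ⟨x⟩
      have H : ∀ w w' : M, dist y z
          ≤ min (f (x, w) + g (w, y)) 1 + min (f (x, w') + g (w', z)) 1 := by
        intro w w'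
        refine katLeMinAddMin (hdiam y z) ?_ (add_nonneg (hf0 _) (hg0 _))
          (add_nonneg (hf0 _) (hg0 _))
        have a1 := (hg2 w y z).2
        have a2 := (abs_le.mp (hg3 z w w').1).2
        have a3 := (hf2 x w w').2
        linarith
      have h1 : ∀ w, dist y z - min (f (x, w) + g (w, y)) 1 ≤ opK f g (x, z) := fun w =>
        le_ciInf fun w' => by linarith [H w w']
      have h2 : dist y z - opK f g (x, z) ≤ opK f g (x, y) :=
        le_ciInf fun w => by linarith [h1 w]
      linarith
    · haveI : Nonempty M := ⟨x⟩
      have A : ∀ a b : M, opK f g (a, x) ≤ opK f g (b, x) + dist a b := by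
        intro a b
        have h1 : opK f g (a, x) - dist a b ≤ opK f g (b, x) :=
          le_ciInf fun w => by
            have u1 : opK f g (a, x) ≤ min (f (a, w) + g (w, x)) 1 :=
              katOpKLeTerm f g hf0 hg0 a x w
            have u2 : min (f (a, w) + g (w, x)) 1
                ≤ min (f (b, w) + g (w, x)) 1 + dist a b :=
              katMinOneLeAdd
                (by have := (abs_le.mp (hf3 w a b).1).2; linarith) dist_nonneg
            linarith
        linarith
      rw [abs_le]
      have a1 := A y z
      have a2 := A z y
      have a3 : dist z y = dist y z := dist_comm z y
      constructor <;> linarith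
    · haveI : Nonempty M := ⟨x⟩
      have H : ∀ w w' : M, dist y z
          ≤ min (f (y, w) + g (w, x)) 1 + min (f (z, w') + g (w', x)) 1 := by
        intro w w'
        refine katLeMinAddMin (hdiam y z) ?_ (add_nonneg (hf0 _) (hg0 _))
          (add_nonneg (hf0 _) (hg0 _))
        have a1 := (hf3 w y z).2
        have a2 := (abs_le.mp (hf2 z w w').1).2
        have a3 := (hg3 x w w').2
        linarith
      have h1 : ∀ w, dist y z - min (f (y, w) + g (w, x)) 1 ≤ opK f g (z, x) := fun w =>
        le_ciInf fun w' => by linarith [H w w']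
      have h2 : dist y z - opK f g (z, x) ≤ opK f g (y, x) :=
        le_ciInf fun w => by linarith [h1 w]
      linarith
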